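/- For every complex number w with |w| < 1 there exists a unique complex number z with |z| < 1 such that z·e^{1−z} = w. Consequently, for each t ≥ 0 the map z ↦ z·e^{1−z} is a bijection from the interior of the deformed Szegő curve γ_t onto the open disk {w : |w| < e^{−t}}. -/

import Mathlib

open Complex Set Metric Filter

/-- The deformed Szegő curve `γ_t = {z : |z e^{1−z}| = e^{−t}, |z| ≤ 1}`. -/
def szegoCurve (t : ℝ) : Set ℂ :=
  {z : ℂ | ‖z * Complex.exp (1 - z)‖ = Real.exp (-t) ∧ ‖z‖ ≤ 1}

/-- The interior `D_t^+` of `γ_t`: the connected component of the complement of `γ_t`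
containing the origin. -/
def szegoInterior (t : ℝ) : Set ℂ :=
  connectedComponentIn (szegoCurve t)ᶜ 0

lemma normSq_sinh' (u : ℂ) :
    Complex.normSq (Complex.sinh u) = Real.sinh u.re ^ 2 + Real.sin u.im ^ 2 := by
  have h1 : Complex.sinh u = (Real.sinh u.re * Real.cos u.im : ℝ) +
      (Real.cosh u.re * Real.sin u.im : ℝ) * Complex.I := by
    conv_lhs => rw [← Complex.re_add_im u]
    rw [Complex.sinh_add, Complex.cosh_mul_I, Complex.sinh_mul_I,
      ← Complex.ofReal_sinh, ← Complex.ofReal_cosh, ← Complex.ofReal_sin, ← Complex.ofReal_cos]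
    push_cast
    ring
  rw [h1, Complex.normSq_apply]
  simp only [Complex.add_re, Complex.add_im, Complex.mul_re, Complex.mul_im,
    Complex.ofReal_re, Complex.ofReal_im, Complex.I_re, Complex.I_im]
  ring_nf
  nlinarith [Real.sin_sq_add_cos_sq u.im, Real.cosh_sq_sub_sinh_sq u.re,
    sq_nonneg (Real.sin u.im), sq_nonneg (Real.sinh u.re)]

lemma real_sinh_le_mul_cosh {x : ℝ} (hx : 0 ≤ x) : Real.sinh x ≤ x * Real.cosh x := by
  set g : ℝ → ℝ := fun t => t * Real.cosh t - Real.sinh t with hg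
  have hd : ∀ t : ℝ, HasDerivAt g (t * Real.sinh t) t := by
    intro t
    have h := ((hasDerivAt_id t).mul (Real.hasDerivAt_cosh t)).sub (Real.hasDerivAt_sinh t)
    refine h.congr_deriv ?_
    simp [id_eq]
    try ring
  have hmono : MonotoneOn g (Set.Ici (0:ℝ)) := by
    apply monotoneOn_of_deriv_nonneg (convex_Ici 0)
      (fun t _ => (hd t).continuousAt.continuousWithinAt)
      (fun t _ => (hd t).differentiableAt.differentiableWithinAt)
    intro t ht
    rw [interior_Ici, Set.mem_Ioi] at ht
    rw [(hd t).deriv]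
    exact mul_nonneg ht.le (Real.sinh_nonneg_iff.2 ht.le)
  have h0 : g 0 = 0 := by simp [hg]
  have := hmono (Set.self_mem_Ici) (Set.mem_Ici.2 hx) hx
  rw [h0] at this
  simpa [hg, sub_nonneg] using this

lemma sinh_sq_le (x : ℝ) : Real.sinh x ^ 2 ≤ x ^ 2 * Real.cosh x ^ 2 := by
  have h2 : |Real.sinh x| ≤ |x| * Real.cosh x := by
    rw [Real.abs_sinh, ← Real.cosh_abs]
    exact real_sinh_le_mul_cosh (abs_nonneg x)
  calc Real.sinh x ^ 2 = |Real.sinh x| ^ 2 := (_root_.sq_abs _).symm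
    _ ≤ (|x| * Real.cosh x) ^ 2 := by
        apply pow_le_pow_left₀ (abs_nonneg _) h2
    _ = x ^ 2 * Real.cosh x ^ 2 := by rw [mul_pow, _root_.sq_abs]


lemma szego_inj (a b : ℂ) (ha : ‖a‖ < 1) (hb : ‖b‖ < 1)
    (h : a * Complex.exp (1 - a) = b * Complex.exp (1 - b)) : a = b := by
  by_contra hne
  set u : ℂ := (a - b) / 2 with hu_def
  set m : ℂ := (a + b) / 2 with hm_def
  have hu : u ≠ 0 := by
    rw [hu_def, div_ne_zero_iff, sub_ne_zero]
    exact ⟨hne, two_ne_zero⟩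
  have ha' : a = m + u := by rw [hm_def, hu_def]; ring
  have hb' : b = m - u := by rw [hm_def, hu_def]; ring
  have h2 : (m + u) * Complex.exp (-u) = (m - u) * Complex.exp u := by
    have e1 : Complex.exp (1 - (m + u)) = Complex.exp (1 - m) * Complex.exp (-u) := by
      rw [← Complex.exp_add]; congr 1; ring
    have e2 : Complex.exp (1 - (m - u)) = Complex.exp (1 - m) * Complex.exp u := by
      rw [← Complex.exp_add]; congr 1; ring
    have h' := h
    rw [ha', hb'] at h'
    rw [e1, e2] at h'
    have hE := Complex.exp_ne_zero (1 - m)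
    apply mul_left_cancel₀ hE
    linear_combination h'
  have hmu : m * Complex.sinh u = u * Complex.cosh u := by
    rw [Complex.sinh, Complex.cosh]
    field_simp
    linear_combination -h2
  by_cases hsz : Complex.sinh u = 0
  · have h0 : u * Complex.cosh u = 0 := by rw [← hmu, hsz, mul_zero]
    have hch : Complex.cosh u = 0 := by
      rcases mul_eq_zero.1 h0 with h' | h'
      · exact absurd h' hu
      · exact h'
    have hcs := Complex.cosh_sq_sub_sinh_sq u
    rw [hsz, hch] at hcs
    norm_num at hcs
  · have hA : a * Complex.sinh u = u * Complex.exp u := by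
      rw [ha', ← Complex.cosh_add_sinh]
      linear_combination hmu
    have hB : b * Complex.sinh u = u * Complex.exp (-u) := by
      rw [hb', ← Complex.cosh_sub_sinh]
      linear_combination hmu
    set S := ‖Complex.sinh u‖ with hS
    have hSpos : 0 < S := by
      rw [hS]
      exact norm_pos_iff.2 hsz
    have h1 : ‖u‖ * Real.exp u.re < S := by
      have e := congrArg (‖·‖) hA
      rw [norm_mul, norm_mul, Complex.norm_exp] at e
      calc ‖u‖ * Real.exp u.re = ‖a‖ * S := e.symm
        _ < 1 * S := by exact mul_lt_mul_of_pos_right ha hSpos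
        _ = S := one_mul S
    have h1' : ‖u‖ * Real.exp (-u.re) < S := by
      have e := congrArg (‖·‖) hB
      rw [norm_mul, norm_mul, Complex.norm_exp, Complex.neg_re] at e
      calc ‖u‖ * Real.exp (-u.re) = ‖b‖ * S := e.symm
        _ < 1 * S := by exact mul_lt_mul_of_pos_right hb hSpos
        _ = S := one_mul S
    have hcosh : ‖u‖ * Real.cosh u.re < S := by
      rw [Real.cosh_eq]
      nlinarith [h1, h1']
    have hsq : (‖u‖ * Real.cosh u.re) ^ 2 < S ^ 2 := by
      apply pow_lt_pow_left₀ hcosh (by positivity)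
      norm_num
    have hS2 : S ^ 2 = Real.sinh u.re ^ 2 + Real.sin u.im ^ 2 := by
      rw [hS, Complex.sq_norm, normSq_sinh' u]
    have hu2 : ‖u‖ ^ 2 = u.re ^ 2 + u.im ^ 2 := by
      rw [Complex.sq_norm, Complex.normSq_apply]; ring
    rw [hS2, mul_pow, hu2] at hsq
    have hy : (0:ℝ) ≤ u.im ^ 2 * (Real.cosh u.re ^ 2 - 1) := by
      apply mul_nonneg (sq_nonneg u.im)
      nlinarith [Real.one_le_cosh u.re]
    nlinarith [sinh_sq_le u.re, Real.sin_sq_le_sq (x := u.im), hy]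
lemma szego_deriv (z : ℂ) :
    HasStrictDerivAt (fun z : ℂ => z * Complex.exp (1 - z))
      ((1 - z) * Complex.exp (1 - z)) z := by
  have h1 : HasStrictDerivAt (fun z : ℂ => Complex.exp (1 - z)) (-Complex.exp (1 - z)) z := by
    have h0 : HasStrictDerivAt (fun z : ℂ => (1 : ℂ) - z) (-1 : ℂ) z := by
      simpa using (hasStrictDerivAt_id z).const_sub (1:ℂ)
    have := (Complex.hasStrictDerivAt_exp (1 - z)).comp z h0
    simpa [mul_comm, Function.comp_def] using this
  have h := (hasStrictDerivAt_id z).mul h1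
  refine h.congr_deriv ?_
  simp [id_eq]
  ring

lemma szego_deriv_ne {z : ℂ} (hz : ‖z‖ < 1) :
    (1 - z) * Complex.exp (1 - z) ≠ 0 := by
  apply mul_ne_zero _ (Complex.exp_ne_zero _)
  rw [sub_ne_zero]
  intro h
  rw [← h] at hz
  simp at hz

lemma szego_boundary {z : ℂ} (hz : ‖z‖ = 1) :
    1 ≤ ‖z * Complex.exp (1 - z)‖ := by
  rw [norm_mul, hz, one_mul, Complex.norm_exp]
  have h1 : z.re ≤ 1 := le_trans (Complex.re_le_norm z) hz.le
  have h2 : (0:ℝ) ≤ (1 - z).re := by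
    rw [Complex.sub_re, Complex.one_re]; linarith
  exact Real.one_le_exp h2

lemma szego_surj {w : ℂ} (hw : ‖w‖ < 1) :
    ∃ z : ℂ, ‖z‖ < 1 ∧ z * Complex.exp (1 - z) = w := by
  set f : ℂ → ℂ := fun z => z * Complex.exp (1 - z) with hf
  have hcont : Continuous f := by
    apply Continuous.mul continuous_id
    exact Complex.continuous_exp.comp (continuous_const.sub continuous_id)
  set U : Set ℂ := f '' Metric.ball 0 1 with hU
  set K : Set ℂ := f '' Metric.closedBall 0 1 with hK
  have hUopen : IsOpen U := by
    rw [isOpen_iff_mem_nhds]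
    rintro v ⟨z, hz, rfl⟩
    rw [Metric.mem_ball, dist_zero_right] at hz
    rw [← (szego_deriv z).map_nhds_eq (szego_deriv_ne hz)]
    exact Filter.image_mem_map (Metric.isOpen_ball.mem_nhds
      (by rw [Metric.mem_ball, dist_zero_right]; exact hz))
  have hKclosed : IsClosed K := ((isCompact_closedBall 0 1).image hcont).isClosed
  have hKU : ∀ v ∈ Metric.ball (0:ℂ) 1, v ∈ K → v ∈ U := by
    rintro v hv ⟨z, hz, rfl⟩
    rw [Metric.mem_ball, dist_zero_right] at hv
    rw [Metric.mem_closedBall, dist_zero_right] at hz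
    refine ⟨z, ?_, rfl⟩
    rw [Metric.mem_ball, dist_zero_right]
    rcases lt_or_eq_of_le hz with h | h
    · exact h
    · exact absurd (szego_boundary h) (not_le.2 hv)
  have hUK : U ⊆ K := Set.image_mono Metric.ball_subset_closedBall
  have h0ball : (0:ℂ) ∈ Metric.ball (0:ℂ) 1 := by
    rw [Metric.mem_ball, dist_zero_right]; norm_num
  have h0U : (0:ℂ) ∈ U := ⟨0, h0ball, by simp [hf]⟩
  have hpre : IsPreconnected (Metric.ball (0:ℂ) 1) := (convex_ball (0:ℂ) 1).isPreconnected
  have hcover : Metric.ball (0:ℂ) 1 ⊆ U ∪ Kᶜ := by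
    intro v hv
    by_cases hvK : v ∈ K
    · exact Or.inl (hKU v hv hvK)
    · exact Or.inr hvK
  have hwball : w ∈ Metric.ball (0:ℂ) 1 := by
    rw [Metric.mem_ball, dist_zero_right]; exact hw
  have hwK : w ∈ K := by
    by_contra hwK
    obtain ⟨v, -, hvU, hvK⟩ := hpre U Kᶜ hUopen hKclosed.isOpen_compl hcover
      ⟨0, h0ball, h0U⟩ ⟨w, hwball, hwK⟩
    exact hvK (hUK hvU)
  obtain ⟨z, hz, hfz⟩ := hKU w hwball hwK
  rw [Metric.mem_ball, dist_zero_right] at hz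
  exact ⟨z, hz, hfz⟩

noncomputable def szegoInv (w : ℂ) : ℂ :=
  if h : ‖w‖ < 1 then Classical.choose (szego_surj h) else 0

lemma szegoInv_spec {w : ℂ} (hw : ‖w‖ < 1) :
    ‖szegoInv w‖ < 1 ∧ szegoInv w * Complex.exp (1 - szegoInv w) = w := by
  rw [szegoInv, dif_pos hw]
  exact Classical.choose_spec (szego_surj hw)

lemma szegoInv_eq {z : ℂ} (hz : ‖z‖ < 1)
    (hz1 : ‖z * Complex.exp (1 - z)‖ < 1) :
    szegoInv (z * Complex.exp (1 - z)) = z := by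
  obtain ⟨h1, h2⟩ := szegoInv_spec hz1
  exact szego_inj _ _ h1 hz h2

lemma szegoInv_continuousAt {w : ℂ} (hw : ‖w‖ < 1) : ContinuousAt szegoInv w := by
  obtain ⟨hz, hfz⟩ := szegoInv_spec hw
  set z := szegoInv w with hzdef
  have hmap : Filter.map (fun z : ℂ => z * Complex.exp (1 - z)) (nhds z) = nhds w := by
    rw [(szego_deriv z).map_nhds_eq (szego_deriv_ne hz), hfz]
  rw [ContinuousAt, ← hzdef, ← hmap, Filter.tendsto_map'_iff]
  have hopen : IsOpen {v : ℂ | ‖v‖ < 1 ∧ ‖v * Complex.exp (1 - v)‖ < 1} := by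
    apply IsOpen.and
    · exact isOpen_lt continuous_norm continuous_const
    · apply isOpen_lt _ continuous_const
      apply continuous_norm.comp
      exact Continuous.mul continuous_id
        (Complex.continuous_exp.comp (continuous_const.sub continuous_id))
  have hev : ((fun v => szegoInv v) ∘ (fun z : ℂ => z * Complex.exp (1 - z)))
      =ᶠ[nhds z] id := by
    filter_upwards [hopen.mem_nhds ⟨hz, by rw [hfz]; exact hw⟩] with v hv
    exact szegoInv_eq hv.1 hv.2
  exact Filter.Tendsto.congr' hev.symm tendsto_id

/-- For every `w` with `|w| < 1` there is a unique `z` with `|z| < 1` and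
`z e^{1−z} = w`; consequently `z ↦ z e^{1−z}` is a bijection from the interior of
`γ_t` onto the open disk of radius `e^{−t}`. -/
theorem conformal_map_bijective :
    (∀ w : ℂ, ‖w‖ < 1 →
      ∃! z : ℂ, ‖z‖ < 1 ∧ z * Complex.exp (1 - z) = w) ∧
    ∀ t : ℝ, 0 ≤ t →
      Set.BijOn (fun z : ℂ => z * Complex.exp (1 - z)) (szegoInterior t)
        {w : ℂ | ‖w‖ < Real.exp (-t)} := by
  constructor
  · intro w hw
    obtain ⟨z, hz, hfz⟩ := szego_surj hw
    refine ⟨z, ⟨hz, hfz⟩, ?_⟩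
    rintro y ⟨hy, hfy⟩
    exact szego_inj y z hy hz (by rw [hfy, hfz])
  · intro t ht
    set c := Real.exp (-t) with hc
    have hc0 : 0 < c := Real.exp_pos _
    have hc1 : c ≤ 1 := Real.exp_le_one_iff.2 (by linarith)
    set D : Set ℂ := {z : ℂ | ‖z‖ < 1 ∧
      ‖z * Complex.exp (1 - z)‖ < c} with hD
    have hDopen : IsOpen D := by
      apply IsOpen.and
      · exact isOpen_lt continuous_norm continuous_const
      · apply isOpen_lt _ continuous_const
        apply continuous_norm.comp
        exact Continuous.mul continuous_id
          (Complex.continuous_exp.comp (continuous_const.sub continuous_id))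
    have h0D : (0:ℂ) ∈ D := by
      constructor
      · simp
      · simpa using hc0
    have h0compl : (0:ℂ) ∈ (szegoCurve t)ᶜ := by
      intro h0
      obtain ⟨h1, -⟩ := h0
      rw [show ‖0 * Complex.exp (1 - 0)‖ = 0 by simp] at h1
      exact absurd h1.symm (ne_of_gt hc0)
    have hDsub : D ⊆ (szegoCurve t)ᶜ := by
      rintro z ⟨-, hz2⟩ ⟨hcurve, -⟩
      rw [hcurve] at hz2
      exact lt_irrefl _ hz2
    -- D is the image of the ball under szegoInv
    have hDimg : D = szegoInv '' Metric.ball 0 c := by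
      ext v
      constructor
      · rintro ⟨hv1, hv2⟩
        refine ⟨v * Complex.exp (1 - v), ?_, szegoInv_eq hv1 (lt_of_lt_of_le hv2 hc1)⟩
        rw [Metric.mem_ball, dist_zero_right]
        exact hv2
      · rintro ⟨w, hwball, rfl⟩
        rw [Metric.mem_ball, dist_zero_right] at hwball
        obtain ⟨h1, h2⟩ := szegoInv_spec (lt_of_lt_of_le hwball hc1)
        refine ⟨h1, ?_⟩
        rw [h2]
        exact hwball
    have hDconn : IsPreconnected D := by
      rw [hDimg]
      apply IsPreconnected.image (convex_ball (0:ℂ) c).isPreconnected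
      intro w hwball
      rw [Metric.mem_ball, dist_zero_right] at hwball
      exact (szegoInv_continuousAt (lt_of_lt_of_le hwball hc1)).continuousWithinAt
    have hsub1 : D ⊆ szegoInterior t :=
      hDconn.subset_connectedComponentIn h0D hDsub
    -- closure of D minus D lies on the curve
    have hclosure : closure D ⊆ {z : ℂ | ‖z‖ ≤ 1 ∧
        ‖z * Complex.exp (1 - z)‖ ≤ c} := by
      apply closure_minimal
      · rintro z ⟨h1, h2⟩
        exact ⟨h1.le, h2.le⟩
      · have e : {z : ℂ | ‖z‖ ≤ 1 ∧
            ‖z * Complex.exp (1 - z)‖ ≤ c} =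
            {z : ℂ | ‖z‖ ≤ 1} ∩
            {z : ℂ | ‖z * Complex.exp (1 - z)‖ ≤ c} := rfl
        rw [e]
        apply IsClosed.inter
        · exact isClosed_le continuous_norm continuous_const
        · apply isClosed_le _ continuous_const
          apply continuous_norm.comp
          exact Continuous.mul continuous_id
            (Complex.continuous_exp.comp (continuous_const.sub continuous_id))
    have hkey : ∀ z : ℂ, z ∈ closure D → z ∉ szegoCurve t → z ∈ D := by
      intro z hzc hznot
      obtain ⟨h1, h2⟩ := hclosure hzc
      have h2' : ‖z * Complex.exp (1 - z)‖ < c := by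
        rcases lt_or_eq_of_le h2 with h | h
        · exact h
        · exact absurd ⟨h, h1⟩ hznot
      refine ⟨?_, h2'⟩
      rcases lt_or_eq_of_le h1 with h | h
      · exact h
      · exfalso
        have := szego_boundary h
        linarith [lt_of_lt_of_le h2' hc1]
    have hsub2 : szegoInterior t ⊆ D := by
      have hCpre : IsPreconnected (szegoInterior t) := isPreconnected_connectedComponentIn
      have hCsub : szegoInterior t ⊆ (szegoCurve t)ᶜ := connectedComponentIn_subset _ _
      have h0C : (0:ℂ) ∈ szegoInterior t := mem_connectedComponentIn h0compl
      have hcover : szegoInterior t ⊆ D ∪ (closure D)ᶜ := by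
        intro z hz
        by_cases hzc : z ∈ closure D
        · exact Or.inl (hkey z hzc (hCsub hz))
        · exact Or.inr hzc
      have hempty : ¬ (szegoInterior t ∩ (closure D)ᶜ).Nonempty := by
        intro hne
        obtain ⟨v, -, hvD, hvc⟩ := hCpre D (closure D)ᶜ hDopen
          isClosed_closure.isOpen_compl hcover ⟨0, h0C, h0D⟩ hne
        exact hvc (subset_closure hvD)
      intro z hz
      rcases hcover hz with h | h
      · exact h
      · exact absurd ⟨z, hz, h⟩ hempty
    have hDeq : szegoInterior t = D := Set.Subset.antisymm hsub2 hsub1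
    rw [hDeq]
    refine ⟨?_, ?_, ?_⟩
    · rintro z ⟨-, hz2⟩
      exact hz2
    · rintro z1 ⟨hz1, -⟩ z2 ⟨hz2, -⟩ heq
      exact szego_inj z1 z2 hz1 hz2 heq
    · intro w hw
      have hw1 : ‖w‖ < 1 := lt_of_lt_of_le hw hc1
      obtain ⟨z, hz, hfz⟩ := szego_surj hw1
      refine ⟨z, ⟨hz, ?_⟩, hfz⟩
      rw [hfz]
      exact hw
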